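/- Let F be a field of characteristic different from 2, a ∈ F^× a non-square, E = F(√a), σ the nontrivial element of Gal(E/F). Assume that −1 ∉ N_{E/F}(E^×) and that every f ∈ F^× can be written f = N_{E/F}(e)·a^ε·g² with e ∈ E^×, ε ∈ {0,1}, g ∈ F^×. Then the G-fixed part of E^×/E^{×2} is exactly the image of F^×: an element e ∈ E^× satisfies σ(e)/e ∈ E^{×2} if and only if e ∈ F^×·E^{×2}. (This is the case n = 1 of the paper's Lemma on extending norm classes, part (2), for p = 2: (k_1 E)^G = i_E k_1 F.) -/

import Mathlib

/-- Let `F` be a field of characteristic different from 2, `a ∈ F^×` a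
non-square, `E = F(√a)`, `σ` the nontrivial element of `Gal(E/F)`.  Assume that
`-1 ∉ N_{E/F}(E^×)` and every `f ∈ F^×` can be written `f = N_{E/F}(e)·a^ε·g²`.  Then the
`G`-fixed part of `E^×/E^{×2}` is exactly the image of `F^×`: an element `e ∈ E^×` satisfies
`σ(e)/e ∈ E^{×2}` if and only if `e ∈ F^×·E^{×2}`. -/
theorem fixed_part_eq_image_of_base
    {F E : Type*} [Field F] [Field E] [Algebra F E]
    (hchar : (2 : F) ≠ 0)
    (a : F) (ha : a ≠ 0) (hns : ∀ f : F, f ^ 2 ≠ a)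
    (α : E) (hα : α ^ 2 = algebraMap F E a)
    (hgen : Algebra.adjoin F {α} = ⊤)
    (σ : E ≃ₐ[F] E) (hσ : σ ≠ 1)
    (hneg : ¬ ∃ e : E, e ≠ 0 ∧ Algebra.norm F e = -1)
    (hdecomp : ∀ f : F, f ≠ 0 → ∃ e : E, ∃ ε : Fin 2, ∃ g : F, e ≠ 0 ∧ g ≠ 0 ∧
      f = Algebra.norm F e * a ^ (ε : ℕ) * g ^ 2) :
    ∀ e : E, e ≠ 0 →
      ((∃ u : E, u ≠ 0 ∧ σ e / e = u ^ 2) ↔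
        ∃ f : F, ∃ u : E, f ≠ 0 ∧ u ≠ 0 ∧ e = algebraMap F E f * u ^ 2) := by
  have hinj : Function.Injective (algebraMap F E) := (algebraMap F E).injective
  have hα0 : α ≠ 0 := by
    intro h
    apply ha
    apply hinj
    rw [map_zero, ← hα, h]
    ring
  -- every element of E is x + y·α
  have hrep : ∀ e : E, ∃ x y : F, e = algebraMap F E x + algebraMap F E y * α := by
    intro e
    have he : e ∈ Algebra.adjoin F {α} := hgen ▸ Algebra.mem_top
    rw [Algebra.adjoin_singleton_eq_range_aeval] at he
    obtain ⟨p, hp⟩ := he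
    have hp' : (Polynomial.aeval α) p = e := hp
    set m : Polynomial F := Polynomial.X ^ 2 - Polynomial.C a with hm
    have hmonic : m.Monic := Polynomial.monic_X_pow_sub_C a (by norm_num)
    have hdeg : (p %ₘ m).degree ≤ 1 := by
      have h1 := Polynomial.degree_modByMonic_lt p hmonic
      rw [hm, Polynomial.degree_X_pow_sub_C (by norm_num)] at h1
      exact Order.le_of_lt_succ (by exact_mod_cast h1)
    have h0 : (Polynomial.aeval α) m = 0 := by
      simp [hm, hα]
    have heq : (Polynomial.aeval α) p = (Polynomial.aeval α) (p %ₘ m) := by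
      conv_lhs => rw [← Polynomial.modByMonic_add_div p m]
      simp [h0]
    refine ⟨(p %ₘ m).coeff 0, (p %ₘ m).coeff 1, ?_⟩
    rw [← hp', heq]
    conv_lhs => rw [Polynomial.eq_X_add_C_of_degree_le_one hdeg]
    simp [Polynomial.aeval_add, Polynomial.aeval_mul]
    ring
  -- uniqueness of representation
  have huniq : ∀ x y : F, algebraMap F E x + algebraMap F E y * α = 0 → x = 0 ∧ y = 0 := by
    intro x y h
    by_cases hy : y = 0
    · subst hy
      simp only [map_zero, zero_mul, add_zero] at h
      exact ⟨hinj (by simpa using h), rfl⟩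
    · exfalso
      have hy' : algebraMap F E y ≠ 0 := fun hc => hy (hinj (by simpa using hc))
      have hαval : algebraMap F E (-x / y) = α := by
        rw [map_div₀, map_neg, div_eq_iff hy']
        linear_combination -h
      apply hns (-x / y)
      apply hinj
      rw [map_pow, hαval, hα]
  have hσα : σ α = -α := by
    have hsq : σ α ^ 2 = α ^ 2 := by
      rw [← map_pow, hα, σ.commutes]
    have h2 : (σ α - α) * (σ α + α) = 0 := by linear_combination hsq
    rcases mul_eq_zero.mp h2 with h | h
    · exfalso
      apply hσ
      have hfix : σ α = α := sub_eq_zero.mp h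
      ext e
      obtain ⟨x, y, rfl⟩ := hrep e
      simp [map_add, map_mul, σ.commutes, hfix]
    · exact eq_neg_of_add_eq_zero_left h
  have hact : ∀ x y : F, σ (algebraMap F E x + algebraMap F E y * α)
      = algebraMap F E x - algebraMap F E y * α := by
    intro x y
    rw [map_add, map_mul, σ.commutes, σ.commutes, hσα]
    ring
  have hσσ : ∀ z : E, σ (σ z) = z := by
    intro z
    obtain ⟨x, y, rfl⟩ := hrep z
    rw [hact x y]
    have h1 : algebraMap F E x - algebraMap F E y * α
        = algebraMap F E x + algebraMap F E (-y) * α := by rw [map_neg]; ring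
    rw [h1, hact, map_neg]
    ring
  have hfixF : ∀ z : E, σ z = z → ∃ f : F, z = algebraMap F E f := by
    intro z hz
    obtain ⟨x, y, rfl⟩ := hrep z
    rw [hact x y] at hz
    have h0 : algebraMap F E 0 + algebraMap F E (y + y) * α = 0 := by
      rw [map_zero, map_add]
      linear_combination -hz
    have hyy := (huniq 0 (y + y) h0).2
    have hy : y = 0 := by
      have h2 : (2 : F) * y = 0 := by linear_combination hyy
      rcases mul_eq_zero.mp h2 with h | h
      · exact absurd h hchar
      · exact h
    exact ⟨x, by rw [hy, map_zero, zero_mul, add_zero]⟩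
  -- basis
  have hli : LinearIndependent F ![(1 : E), α] := by
    rw [linearIndependent_fin2]
    refine ⟨by simpa using hα0, ?_⟩
    intro c hc
    simp only [Matrix.cons_val_one, Matrix.head_cons, Matrix.cons_val_zero] at hc
    have hc0 : c ≠ 0 := by
      intro h; rw [h, zero_smul] at hc; exact zero_ne_one hc
    have hcE : algebraMap F E c ≠ 0 := fun h => hc0 (hinj (by simpa using h))
    have hαv : α = algebraMap F E c⁻¹ := by
      rw [Algebra.smul_def] at hc
      rw [map_inv₀]
      field_simp
      linear_combination hc
    apply hns c⁻¹
    apply hinj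
    rw [map_pow, ← hαv, hα]
  have hsp : ⊤ ≤ Submodule.span F (Set.range ![(1 : E), α]) := by
    intro z _
    obtain ⟨x, y, rfl⟩ := hrep z
    have h1 : (1 : E) ∈ Set.range ![(1 : E), α] := ⟨0, rfl⟩
    have h2 : α ∈ Set.range ![(1 : E), α] := ⟨1, rfl⟩
    have hz : algebraMap F E x + algebraMap F E y * α = x • (1 : E) + y • α := by
      rw [Algebra.smul_def, Algebra.smul_def]; ring
    rw [hz]
    exact Submodule.add_mem _ (Submodule.smul_mem _ _ (Submodule.subset_span h1))
      (Submodule.smul_mem _ _ (Submodule.subset_span h2))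
  let b : Module.Basis (Fin 2) F E := Module.Basis.mk hli hsp
  have hb0 : b 0 = 1 := by simp [b, Module.Basis.mk_apply]
  have hb1 : b 1 = α := by simp [b, Module.Basis.mk_apply]
  have hrepr : ∀ (c0 c1 : F) (i : Fin 2), b.repr (c0 • b 0 + c1 • b 1) i = ![c0, c1] i := by
    intro c0 c1 i
    rw [map_add, map_smul, map_smul, b.repr_self, b.repr_self]
    fin_cases i <;> simp
  have hnorm : ∀ x y : F,
      Algebra.norm F (algebraMap F E x + algebraMap F E y * α) = x ^ 2 - a * y ^ 2 := by
    intro x y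
    rw [Algebra.norm_eq_matrix_det b, Matrix.det_fin_two,
      Algebra.leftMulMatrix_eq_repr_mul, Algebra.leftMulMatrix_eq_repr_mul,
      Algebra.leftMulMatrix_eq_repr_mul, Algebra.leftMulMatrix_eq_repr_mul]
    have e0 : (algebraMap F E x + algebraMap F E y * α) * b 0 = x • b 0 + y • b 1 := by
      rw [hb0, hb1, Algebra.smul_def, Algebra.smul_def]; ring
    have e1 : (algebraMap F E x + algebraMap F E y * α) * b 1 = (a * y) • b 0 + x • b 1 := by
      rw [hb0, hb1, Algebra.smul_def, Algebra.smul_def, map_mul]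
      linear_combination algebraMap F E y * hα
    rw [e0, e1, hrepr, hrepr, hrepr, hrepr]
    simp
    ring
  -- main proof
  intro e he
  constructor
  · rintro ⟨u, hu0, hu⟩
    have hσe2 : σ e = e * u ^ 2 := by
      rw [div_eq_iff he] at hu
      rw [hu]; ring
    have h2 : e = σ e * σ u ^ 2 := by
      have h := congrArg σ hσe2
      rwa [map_mul, map_pow, hσσ] at h
    have hNu : (u * σ u) ^ 2 = 1 := by
      have h3 : e * 1 = e * (u * σ u) ^ 2 := by
        conv_lhs => rw [mul_one, h2, hσe2]
        ring
      exact (mul_left_cancel₀ he h3).symm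
    obtain ⟨x, y, hxy⟩ := hrep u
    have hσu : σ u = algebraMap F E x - algebraMap F E y * α := by rw [hxy, hact]
    have hprod : u * σ u = algebraMap F E (x ^ 2 - a * y ^ 2) := by
      rw [hσu, hxy, map_sub, map_pow, map_mul, map_pow]
      linear_combination (-(algebraMap F E y) ^ 2) * hα
    have hNu' : (u * σ u) * (u * σ u) = 1 := by rw [← sq]; exact hNu
    rcases mul_self_eq_one_iff.mp hNu' with hcase | hcase
    · by_cases hv0 : (1 : E) + u = 0
      · have hu1 : u = -1 := by linear_combination hv0
        have hfix : σ e = e := by rw [hσe2, hu1]; ring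
        obtain ⟨f, hf⟩ := hfixF e hfix
        refine ⟨f, 1, fun h0 => he (by rw [hf, h0, map_zero]), one_ne_zero, by rw [hf]; ring⟩
      · have hσv : σ (1 + u) * u = 1 + u := by
          rw [map_add, map_one]
          linear_combination hcase
        have hfix : σ (e * (1 + u) ^ 2) = e * (1 + u) ^ 2 := by
          rw [map_mul, map_pow, hσe2]
          have hvv : σ (1 + u) ^ 2 * u ^ 2 = (1 + u) ^ 2 := by
            linear_combination (σ (1 + u) * u + (1 + u)) * hσv
          linear_combination e * hvv
        obtain ⟨f, hf⟩ := hfixF _ hfix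
        refine ⟨f, (1 + u)⁻¹, ?_, inv_ne_zero hv0, ?_⟩
        · intro h0
          rw [h0, map_zero] at hf
          rcases mul_eq_zero.mp hf with h | h
          · exact he h
          · exact hv0 (pow_eq_zero_iff (by norm_num) |>.mp h)
        · rw [← hf]
          field_simp
    · exfalso
      apply hneg
      refine ⟨u, hu0, ?_⟩
      rw [hxy, hnorm]
      apply hinj
      rw [← hprod, map_neg, map_one]
      exact hcase
  · rintro ⟨f, u, hf, hu, rfl⟩
    have hσu : σ u ≠ 0 := fun hc => hu (by simpa using congrArg σ.symm hc)
    have hfE : algebraMap F E f ≠ 0 := fun hc => hf (hinj (by rw [hc, map_zero]))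
    refine ⟨σ u / u, div_ne_zero hσu hu, ?_⟩
    rw [map_mul, map_pow, σ.commutes]
    field_simp
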